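/- Let x ≥ 4 be an even integer and let d_0, …, d_{x−1} ∈ Z_6 be such that d_0 + d_1 + ⋯ + d_{x−1} ∈ {0, 2, 4} in Z_6. Let G be the simple graph on vertex set Z_x × Z_6 whose edge set consists of the cross edges {(k, j), (k+1, j+d_k)} for all k ∈ Z_x and j ∈ Z_6, together with, for each k ∈ Z_x, the six inside edges {(k,0),(k,1)}, {(k,1),(k,2)}, {(k,2),(k,3)}, {(k,3),(k,4)}, {(k,4),(k,5)}, {(k,5),(k,0)}. Then the edge set of G can be partitioned into two C_{2x}-factors. -/

import Mathlib

/-- `E` is a `C_m`-factor: in the graph with edge set `E`, every vertex has exactly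
two neighbours and every connected component has exactly `m` vertices, i.e. the
graph is a spanning 2-regular graph all of whose components are cycles of length `m`. -/
def IsCycleFactor {V : Type*} (E : Set (Sym2 V)) (m : ℕ) : Prop :=
  (∀ a : V, {b | (SimpleGraph.fromEdgeSet E).Adj a b}.ncard = 2) ∧
  (∀ a : V, {b | (SimpleGraph.fromEdgeSet E).Reachable a b}.ncard = m)

set_option linter.unusedSectionVars false

lemma isCycleFactor_of_iterate {V : Type*} (f : V → V) (n : ℕ) (hn : 3 ≤ n)
    (h1 : ∀ v, f^[n] v = v) (h2 : ∀ v, ∀ i, 0 < i → i < n → f^[i] v ≠ v) :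
    IsCycleFactor {e | ∃ v, e = s(v, f v)} n := by
  classical
  have hnpos : 0 < n := by omega
  have hmod : ∀ (v : V) (i : ℕ), f^[i] v = f^[i % n] v := by
    intro v i
    conv_lhs => rw [← Nat.mod_add_div i n]
    rw [Function.iterate_add_apply, Function.iterate_mul]
    rw [Function.iterate_fixed (h1 v) (i / n)]
  have hpre : ∀ v, f^[n-1] (f v) = v := by
    intro v
    rw [← Function.iterate_succ_apply, Nat.succ_eq_add_one, Nat.sub_add_cancel (by omega)]
    exact h1 v
  have hpost : ∀ v, f (f^[n-1] v) = v := by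
    intro v
    have h := (Function.iterate_succ_apply' f (n-1) v).symm
    rw [Nat.succ_eq_add_one, Nat.sub_add_cancel (by omega)] at h
    rw [h, h1 v]
  set E : Set (Sym2 V) := {e | ∃ v, e = s(v, f v)} with hE
  have hadj : ∀ a b, (SimpleGraph.fromEdgeSet E).Adj a b ↔
      ((b = f a ∨ b = f^[n-1] a) ∧ a ≠ b) := by
    intro a b
    rw [SimpleGraph.fromEdgeSet_adj]
    constructor
    · rintro ⟨⟨v, hv⟩, hne⟩
      refine ⟨?_, hne⟩
      rw [Sym2.eq_iff] at hv
      rcases hv with ⟨rfl, rfl⟩ | ⟨rfl, rfl⟩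
      · exact Or.inl rfl
      · right; rw [hpre]
    · rintro ⟨hb | hb, hne⟩
      · exact ⟨⟨a, by rw [hb]⟩, hne⟩
      · refine ⟨⟨f^[n-1] a, ?_⟩, hne⟩
        rw [hpost, hb, Sym2.eq_swap]
  have hne1 : ∀ v, f v ≠ v := by
    intro v
    have := h2 v 1 (by omega) (by omega)
    simpa using this
  constructor
  · intro a
    have hset : {b | (SimpleGraph.fromEdgeSet E).Adj a b} = {f a, f^[n-1] a} := by
      ext b
      simp only [Set.mem_setOf_eq, hadj, Set.mem_insert_iff, Set.mem_singleton_iff]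
      constructor
      · rintro ⟨h | h, _⟩
        · exact Or.inl h
        · exact Or.inr h
      · rintro (rfl | rfl)
        · exact ⟨Or.inl rfl, fun h => hne1 a h.symm⟩
        · exact ⟨Or.inr rfl, fun h => h2 a (n-1) (by omega) (by omega) h.symm⟩
    rw [hset]
    rw [Set.ncard_pair]
    intro h
    have : f^[2] a = a := by
      have := congrArg f h
      rw [hpost] at this
      simpa [Function.iterate_succ_apply'] using this
    exact h2 a 2 (by omega) (by omega) this
  · intro a
    have hforward : ∀ i : ℕ, (SimpleGraph.fromEdgeSet E).Reachable a (f^[i] a) := by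
      intro i
      induction i with
      | zero => exact SimpleGraph.Reachable.refl a
      | succ i ih =>
        refine ih.trans (SimpleGraph.Adj.reachable ?_)
        rw [hadj]
        refine ⟨Or.inl (Function.iterate_succ_apply' f i a), fun h => hne1 (f^[i] a) ?_⟩
        rw [Function.iterate_succ_apply'] at h
        exact h.symm
    have hback : ∀ (u b : V) (w : (SimpleGraph.fromEdgeSet E).Walk u b), ∃ i, b = f^[i] u := by
      intro u b w
      induction w with
      | nil => exact ⟨0, rfl⟩
      | cons h p ih =>
        obtain ⟨i, rfl⟩ := ih
        rw [hadj] at h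
        rcases h.1 with h' | h'
        · exact ⟨i + 1, by rw [Function.iterate_add_apply, Function.iterate_one, h']⟩
        · exact ⟨i + (n-1), by rw [Function.iterate_add_apply, h']⟩
    have hset : {b | (SimpleGraph.fromEdgeSet E).Reachable a b} =
        ↑((Finset.range n).image (fun i => f^[i] a)) := by
      ext b
      simp only [Set.mem_setOf_eq, Finset.coe_image, Finset.coe_range, Set.mem_image,
        Set.mem_Iio]
      constructor
      · intro hr
        obtain ⟨w⟩ := hr
        obtain ⟨i, rfl⟩ := hback a _ w
        exact ⟨i % n, Nat.mod_lt i hnpos, (hmod a i).symm⟩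
      · rintro ⟨i, _, rfl⟩
        exact hforward i
    rw [hset, Set.ncard_coe_finset]
    rw [Finset.card_image_of_injOn, Finset.card_range]
    intro i hi j hj hij
    simp only [Finset.coe_range, Set.mem_Iio] at hi hj
    by_contra hne
    rcases Nat.lt_or_ge i j with hlt | hge
    · have := congrArg (f^[n - j]) hij
      rw [← Function.iterate_add_apply, ← Function.iterate_add_apply] at this
      rw [Nat.sub_add_cancel (le_of_lt hj), h1] at this
      exact h2 a (n - j + i) (by omega) (by omega) this
    · have hlt : j < i := by omega
      have := congrArg (f^[n - i]) hij
      rw [← Function.iterate_add_apply, ← Function.iterate_add_apply] at this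
      rw [Nat.sub_add_cancel (le_of_lt hi), h1] at this
      exact h2 a (n - i + j) (by omega) (by omega) this.symm

namespace CFaux

def par : ZMod 6 →+* ZMod 2 := ZMod.castHom (show (2:ℕ) ∣ 6 by norm_num) (ZMod 2)

variable {x : ℕ} [NeZero x] (d : ZMod x → ZMod 6) (t : ℕ)

def pf (k : ZMod x) : ZMod 2 := (k.val : ZMod 2) + ∑ i ∈ Finset.range k.val, par (d i)

def mf (k : ZMod x) : ZMod 2 := pf d k + 1 + (if k.val < t then 1 else 0)

def F (a : ZMod 2) (v : ZMod x × ZMod 6) : ZMod x × ZMod 6 :=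
  if par v.2 = pf d v.1 + a then (v.1 + 1, v.2 + d v.1)
  else if par v.2 = mf d t v.1 + a then (v.1, v.2 + 1) else (v.1, v.2 - 1)

def stp (z : ZMod x) : ZMod 6 := d z + (if (z + 1).val < t then -1 else 1)

lemma z2a : ∀ P Q a : ZMod 2, P + a + Q = P + Q + 1 + a + 1 := by decide
lemma z2b : ∀ P a : ZMod 2, ¬ (P + a + 1 = P + a) := by decide
lemma z2c : ∀ P a : ZMod 2, ¬ (P + a + 1 = P + 1 + 1 + a) := by decide
lemma z2d : ∀ P a : ZMod 2, P + a + 1 = P + 1 + 0 + a := by decide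
lemma z2e : ∀ u v : ZMod 2, u + v = 0 → (0:ZMod 2) + 0 = 1 + u + v + 1 := by decide

lemma pf_step (hev : Even x) (hT : ∑ i ∈ Finset.range x, par (d i) = 0) (k : ZMod x) :
    pf d (k + 1) = pf d k + par (d k) + 1 := by
  have hm : k.val < x := ZMod.val_lt k
  have hk : ((k.val : ℕ) : ZMod x) = k := ZMod.natCast_rightInverse k
  have hk1 : k + 1 = ((k.val + 1 : ℕ) : ZMod x) := by push_cast [hk]; ring
  rcases Nat.lt_or_ge (k.val + 1) x with h | h
  · have hv : (k + 1).val = k.val + 1 := by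
      rw [hk1, ZMod.val_natCast, Nat.mod_eq_of_lt h]
    unfold pf
    rw [hv, Finset.sum_range_succ, hk]
    push_cast
    ring
  · have hx1 : k.val + 1 = x := by omega
    have hv : (k + 1).val = 0 := by
      rw [hk1, ZMod.val_natCast, hx1, Nat.mod_self]
    unfold pf
    rw [hv]
    have hsum : ∑ i ∈ Finset.range k.val, par (d i) + par (d k) = 0 := by
      have hs := Finset.sum_range_succ (fun i => par (d (i : ZMod x))) k.val
      rw [hx1, hT, hk] at hs
      exact hs.symm
    have hx2 : ((k.val : ℕ) : ZMod 2) = 1 := by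
      obtain ⟨y, hy⟩ := hev
      have h5 : k.val = 2 * (y - 1) + 1 := by omega
      rw [h5]
      push_cast
      rw [show (2 : ZMod 2) = (0:ZMod 2) by decide]
      ring
    simp only [Nat.cast_zero, Finset.range_zero, Finset.sum_empty]
    rw [hx2]
    exact z2e _ _ hsum
  
lemma par_stp (z : ZMod x) : par (stp d t z) = par (d z) + 1 := by
  unfold stp
  rw [map_add]
  congr 1
  split
  · simp only [par, ZMod.castHom_apply]; decide
  · simp only [par, ZMod.castHom_apply]; decide

lemma F_two_step (hp : ∀ k, pf d (k + 1) = pf d k + par (d k) + 1) (a : ZMod 2)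
    (k : ZMod x) (j : ZMod 6) (hj : par j = pf d k + a) :
    F d t a (F d t a (k, j)) = (k + 1, j + stp d t k) := by
  have h1 : F d t a (k, j) = (k + 1, j + d k) := by
    unfold F; simp only [if_pos hj]
  rw [h1]
  have hpar : par (j + d k) = pf d (k + 1) + a + 1 := by
    rw [map_add, hj, hp k]
    exact z2a _ _ _
  have hne : ¬ (par (j + d k) = pf d (k + 1) + a) := by
    rw [hpar]
    exact z2b _ _
  unfold F
  rw [if_neg hne]
  by_cases hc : (k + 1).val < t
  · have hm : ¬ (par (j + d k) = mf d t (k + 1) + a) := by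
      rw [hpar]
      unfold mf
      rw [if_pos hc]
      exact z2c _ _
    rw [if_neg hm]
    unfold stp
    rw [if_pos hc]
    simp only [Prod.mk.injEq]
    exact ⟨trivial, by ring⟩
  · have hm : par (j + d k) = mf d t (k + 1) + a := by
      rw [hpar]
      unfold mf
      rw [if_neg hc]
      exact z2d _ _
    rw [if_pos hm]
    unfold stp
    rw [if_neg hc]
    simp only [Prod.mk.injEq]
    exact ⟨trivial, by ring⟩

lemma F_traj (hp : ∀ k, pf d (k+1) = pf d k + par (d k) + 1) (a : ZMod 2)
    (k : ZMod x) (j : ZMod 6) (hj : par j = pf d k + a) (s : ℕ) :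
    (F d t a)^[2*s] (k, j) = (k + (s : ZMod x), j + ∑ i ∈ Finset.range s, stp d t (k + i)) ∧
    par (j + ∑ i ∈ Finset.range s, stp d t (k + i)) = pf d (k + (s : ZMod x)) + a := by
  induction s with
  | zero => simp [hj]
  | succ s ih =>
    obtain ⟨ih1, ih2⟩ := ih
    set S := ∑ i ∈ Finset.range s, stp d t (k + i) with hS
    have hiter : (F d t a)^[2*(s+1)] (k,j) = F d t a (F d t a ((F d t a)^[2*s] (k,j))) := by
      rw [show 2*(s+1) = 2 + 2*s by ring, Function.iterate_add_apply]
      rfl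
    have hstep := F_two_step d t hp a (k + (s:ZMod x)) (j + S) ih2
    have hsum1 : ∑ i ∈ Finset.range (s+1), stp d t (k + i) = S + stp d t (k + (s:ZMod x)) := by
      rw [Finset.sum_range_succ]
    have hcast : ((s+1 : ℕ) : ZMod x) = (s : ZMod x) + 1 := by push_cast; ring
    constructor
    · rw [hiter, ih1, hstep, hsum1, hcast]
      simp only [Prod.mk.injEq]
      exact ⟨by ring, by ring⟩
    · rw [hsum1, hcast]
      rw [← add_assoc, map_add, ih2, par_stp]
      rw [show k + ((s:ZMod x) + 1) = (k + (s:ZMod x)) + 1 from (add_assoc _ _ _).symm, hp]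
      ring

lemma sum_univ_range {M : Type*} [AddCommMonoid M] (G : ZMod x → M) :
    ∑ i ∈ Finset.range x, G i = ∑ z : ZMod x, G z := by
  apply Finset.sum_nbij' (fun i => ((i:ℕ) : ZMod x)) (fun z => z.val)
  · intros; exact Finset.mem_univ _
  · intro z _; exact Finset.mem_range.2 (ZMod.val_lt z)
  · intro i hi; exact ZMod.val_natCast_of_lt (Finset.mem_range.1 hi)
  · intro z _; exact ZMod.natCast_rightInverse z
  · intro i _; rfl

lemma sum_stp_zero (ht : t ≤ x)
    (ht6 : ((2*t : ℕ) : ZMod 6) = (∑ i ∈ Finset.range x, d i) + (x : ZMod 6)) (k : ZMod x) :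
    ∑ i ∈ Finset.range x, stp d t (k + i) = 0 := by
  have e1 : ∑ i ∈ Finset.range x, stp d t (k + i) = ∑ z : ZMod x, stp d t (k + z) :=
    sum_univ_range (fun z => stp d t (k+z))
  have e1b : ∑ z : ZMod x, stp d t (k + z) = ∑ z : ZMod x, stp d t z :=
    Fintype.sum_equiv (Equiv.addLeft k) _ _ (fun z => rfl)
  have e2 : ∑ z : ZMod x, stp d t z =
      (∑ z : ZMod x, d z) + ∑ z : ZMod x, (if (z+1).val < t then (-1 : ZMod 6) else 1) := by
    unfold stp
    rw [Finset.sum_add_distrib]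
  have e3 : ∑ z : ZMod x, (if (z+1).val < t then (-1:ZMod 6) else 1)
      = ∑ z : ZMod x, (if z.val < t then (-1:ZMod 6) else 1) :=
    Fintype.sum_equiv (Equiv.addRight 1) _ _ (fun z => rfl)
  have e4 : ∑ z : ZMod x, (if z.val < t then (-1:ZMod 6) else 1)
      = ∑ i ∈ Finset.range x, (if i < t then (-1:ZMod 6) else 1) := by
    rw [← sum_univ_range (fun z : ZMod x => if z.val < t then (-1:ZMod 6) else 1)]
    refine Finset.sum_congr rfl (fun i hi => ?_)
    rw [ZMod.val_natCast_of_lt (Finset.mem_range.1 hi)]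
  have e5 : ∑ i ∈ Finset.range x, (if i < t then (-1:ZMod 6) else 1)
      = ((x - t : ℕ) : ZMod 6) - (t : ZMod 6) := by
    rw [Finset.range_eq_Ico, ← Finset.sum_Ico_consecutive _ (Nat.zero_le t) ht]
    have hA : ∑ i ∈ Finset.Ico 0 t, (if i < t then (-1:ZMod 6) else 1) = t • (-1:ZMod 6) := by
      rw [Finset.sum_congr rfl (fun i hi => if_pos (Finset.mem_Ico.1 hi).2), Finset.sum_const,
        Nat.card_Ico, Nat.sub_zero]
    have hB : ∑ i ∈ Finset.Ico t x, (if i < t then (-1:ZMod 6) else 1) = (x - t) • (1:ZMod 6) := by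
      rw [Finset.sum_congr rfl (fun i hi => if_neg (not_lt.2 (Finset.mem_Ico.1 hi).1)),
        Finset.sum_const, Nat.card_Ico]
    rw [hA, hB]
    simp [nsmul_eq_mul]
    ring
  have e6 : (∑ z : ZMod x, d z) = ∑ i ∈ Finset.range x, d i := (sum_univ_range d).symm
  rw [e1, e1b, e2, e3, e4, e5, e6, Nat.cast_sub ht]
  push_cast at ht6
  linear_combination -ht6

lemma z2f : ∀ b c : ZMod 2, b ≠ c → b = c + 1 := by decide
lemma z2h : ∀ P Q a : ZMod 2, ¬ (P + a + Q = P + Q + 1 + a) := by decide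
lemma z2i : ∀ P Q a : ZMod 2, P + Q + 1 + a + 1 - Q = P + a := by decide

lemma F_orbit (hx : 4 ≤ x) (hp : ∀ k, pf d (k+1) = pf d k + par (d k) + 1)
    (hz : ∀ k : ZMod x, ∑ i ∈ Finset.range x, stp d t (k + i) = 0) (a : ZMod 2) :
    (∀ v, (F d t a)^[2*x] v = v) ∧
    (∀ v i, 0 < i → i < 2*x → (F d t a)^[i] v ≠ v) := by
  have hA1 : ∀ k j, par j = pf d k + a → (F d t a)^[2*x] (k, j) = (k, j) := by
    intro k j hj
    have h := (F_traj d t hp a k j hj x).1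
    rw [hz k, ZMod.natCast_self, add_zero, add_zero] at h
    exact h
  have hA2 : ∀ k j, par j = pf d k + a → ∀ i, 0 < i → i < 2*x → (F d t a)^[i] (k, j) ≠ (k, j) := by
    intro k j hj i hi1 hi2
    rcases Nat.even_or_odd i with ⟨s, hs⟩ | ⟨s, hs⟩
    · have hs' : i = 2 * s := by omega
      have hs0 : 0 < s := by omega
      have hsx : s < x := by omega
      have h := (F_traj d t hp a k j hj s).1
      rw [hs', h]
      intro hcon
      rw [Prod.mk.injEq] at hcon
      have hc1 : ((s:ℕ) : ZMod x) = 0 := by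
        have := hcon.1
        rwa [add_eq_left] at this
      rw [ZMod.natCast_eq_zero_iff] at hc1
      have := Nat.le_of_dvd hs0 hc1
      omega
    · have hsx : s < x := by omega
      have htr := F_traj d t hp a k j hj s
      set S := ∑ i ∈ Finset.range s, stp d t (k + i) with hS
      have hit : (F d t a)^[2*s+1] (k,j) = F d t a ((F d t a)^[2*s] (k,j)) :=
        Function.iterate_succ_apply' _ _ _
      rw [hs, hit, htr.1]
      have hcross : F d t a (k + (s:ZMod x), j + S) = (k + (s:ZMod x) + 1, (j + S) + d (k + (s:ZMod x))) := by
        unfold F; simp only [if_pos htr.2]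
      rw [hcross]
      intro hcon
      rw [Prod.mk.injEq] at hcon
      obtain ⟨hc1, hc2⟩ := hcon
      have hpj : par ((j + S) + d (k + (s:ZMod x))) = par j := by rw [hc2]
      rw [map_add, htr.2, hj] at hpj
      have h4 := hp (k + (s:ZMod x))
      rw [hc1] at h4
      rw [h4] at hpj
      exact z2h _ _ _ hpj
  have hB : ∀ k j, ¬ (par j = pf d k + a) →
      par (j - d (k-1)) = pf d (k-1) + a ∧ F d t a (k - 1, j - d (k-1)) = (k, j) := by
    intro k j hj
    have hj' : par j = pf d k + a + 1 := z2f _ _ hj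
    have h4 := hp (k - 1)
    rw [sub_add_cancel] at h4
    have hu : par (j - d (k-1)) = pf d (k-1) + a := by
      rw [map_sub, hj', h4]
      exact z2i _ _ _
    refine ⟨hu, ?_⟩
    unfold F
    simp only [if_pos hu]
    rw [Prod.mk.injEq]
    exact ⟨sub_add_cancel _ _, sub_add_cancel _ _⟩
  constructor
  · rintro ⟨k, j⟩
    by_cases hv : par j = pf d k + a
    · exact hA1 k j hv
    · obtain ⟨hu, hFu⟩ := hB k j hv
      rw [← hFu, ← Function.iterate_succ_apply, Function.iterate_succ_apply',
        hA1 _ _ hu, hFu]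
  · rintro ⟨k, j⟩ i hi1 hi2
    by_cases hv : par j = pf d k + a
    · exact hA2 k j hv i hi1 hi2
    · obtain ⟨hu, hFu⟩ := hB k j hv
      intro heq
      have heq2 : (F d t a)^[i+1] (k - 1, j - d (k-1)) = F d t a (k - 1, j - d (k-1)) := by
        rw [Function.iterate_succ_apply]
        rw [hFu]
        exact heq
      rcases Nat.lt_or_ge (i+1) (2*x) with hlt | hge
      · have e1 : (F d t a)^[2*x - (i+1)] ((F d t a)^[i+1] (k - 1, j - d (k-1)))
            = (F d t a)^[2*x] (k - 1, j - d (k-1)) := by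
          rw [← Function.iterate_add_apply]
          congr 1
          omega
        have e2 := (Function.iterate_succ_apply (F d t a) (2*x - (i+1)) (k - 1, j - d (k-1))).symm
        have h5 := congrArg ((F d t a)^[2*x - (i+1)]) heq2
        rw [e1, e2] at h5
        rw [hA1 _ _ hu] at h5
        rw [Nat.succ_eq_add_one, show 2*x - (i+1) + 1 = 2*x - i by omega] at h5
        exact hA2 _ _ hu (2*x - i) (by omega) (by omega) h5.symm
      · have hieq : i + 1 = 2*x := by omega
        rw [hieq, hA1 _ _ hu] at heq2
        have := hA2 _ _ hu 1 (by omega) (by omega)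
        rw [Function.iterate_one] at this
        exact this heq2.symm

lemma par_one : par (1 : ZMod 6) = 1 := by
  simp only [par, ZMod.castHom_apply]; decide

lemma z2b' : ∀ P a : ZMod 2, ¬ (P + a + 1 = P + a) := z2b

lemma E_eq (a : ZMod 2) :
    {e : Sym2 (ZMod x × ZMod 6) | ∃ v, e = s(v, F d t a v)} =
    {e : Sym2 (ZMod x × ZMod 6) | ∃ k j, par j = pf d k + a ∧ e = s((k, j), (k + 1, j + d k))} ∪
    {e : Sym2 (ZMod x × ZMod 6) | ∃ k j, par j = mf d t k + a ∧ e = s((k, j), (k, j + 1))} := by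
  ext e
  simp only [Set.mem_setOf_eq, Set.mem_union]
  constructor
  · rintro ⟨⟨k, j⟩, rfl⟩
    by_cases h1 : par j = pf d k + a
    · left
      refine ⟨k, j, h1, ?_⟩
      unfold F
      simp only [if_pos h1]
    · by_cases h2 : par j = mf d t k + a
      · right
        refine ⟨k, j, h2, ?_⟩
        unfold F
        simp only [if_neg h1, if_pos h2]
      · right
        refine ⟨k, j - 1, ?_, ?_⟩
        · have h3 := z2f _ _ h2
          rw [map_sub, h3, par_one]
          ring
        · unfold F
          simp only [if_neg h1, if_neg h2]
          rw [sub_add_cancel]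
          exact Sym2.eq_swap
  · rintro (⟨k, j, hpar, rfl⟩ | ⟨k, j, hpar, rfl⟩)
    · refine ⟨(k, j), ?_⟩
      unfold F
      simp only [if_pos hpar]
    · by_cases h1 : par j = pf d k + a
      · refine ⟨(k, j + 1), ?_⟩
        have hn1 : ¬ (par (j+1) = pf d k + a) := by
          rw [map_add, h1, par_one]
          exact z2b _ _
        have hn2 : ¬ (par (j+1) = mf d t k + a) := by
          rw [map_add, hpar, par_one]
          exact z2b _ _
        unfold F
        simp only [if_neg hn1, if_neg hn2]
        rw [add_sub_cancel_right]
        exact Sym2.eq_swap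
      · refine ⟨(k, j), ?_⟩
        unfold F
        simp only [if_neg h1, if_pos hpar]


end CFaux

open CFaux in
theorem gDelta_plus_two_inside_factors (x : ℕ) (hx : 4 ≤ x) (hev : Even x)
    (d : ZMod x → ZMod 6)
    (hsum : (∑ k ∈ Finset.range x, d (k : ZMod x)) ∈ ({0, 2, 4} : Set (ZMod 6)))
    (G : SimpleGraph (ZMod x × ZMod 6))
    (hG : G = SimpleGraph.fromEdgeSet
      ({e : Sym2 (ZMod x × ZMod 6) |
          ∃ (k : ZMod x) (j : ZMod 6), e = s((k, j), (k + 1, j + d k))} ∪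
       {e : Sym2 (ZMod x × ZMod 6) |
          ∃ (k : ZMod x) (j : ZMod 6), e = s((k, j), (k, j + 1))})) :
    ∃ E₁ E₂ : Set (Sym2 (ZMod x × ZMod 6)),
      Disjoint E₁ E₂ ∧ E₁ ∪ E₂ = G.edgeSet ∧
      IsCycleFactor E₁ (2 * x) ∧ IsCycleFactor E₂ (2 * x) := by
  haveI : NeZero x := ⟨by omega⟩
  simp only [Set.mem_insert_iff, Set.mem_singleton_iff] at hsum
  -- choose t
  obtain ⟨y, hy⟩ := hev
  have key : ∀ u : ZMod 6, (u = 0 ∨ u = 2 ∨ u = 4) → ∀ v : ZMod 6,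
      (u + 2*v = 0 ∨ u + 2*v = 2 ∨ u + 2*v = 4) := by decide
  have hx6 : ((x:ℕ) : ZMod 6) = 2 * ((y:ℕ) : ZMod 6) := by rw [hy]; push_cast; ring
  have hc6 : ∃ t : ℕ, t ≤ 2 ∧
      ((2*t : ℕ) : ZMod 6) = (∑ k ∈ Finset.range x, d (k : ZMod x)) + (x : ZMod 6) := by
    rcases key _ hsum ((y:ℕ) : ZMod 6) with h | h | h
    · refine ⟨0, by omega, ?_⟩
      rw [hx6]; push_cast; linear_combination -h
    · refine ⟨1, by omega, ?_⟩
      rw [hx6]; push_cast; linear_combination -h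
    · refine ⟨2, by omega, ?_⟩
      rw [hx6]; push_cast; linear_combination -h
  obtain ⟨t, ht2, ht6⟩ := hc6
  -- parity sum is zero
  have hT : ∑ i ∈ Finset.range x, par (d i) = 0 := by
    rw [← map_sum]
    have key2 : ∀ u : ZMod 6, (u = 0 ∨ u = 2 ∨ u = 4) → par u = 0 := by
      intro u h
      simp only [par, ZMod.castHom_apply]
      revert u
      decide
    exact key2 _ hsum
  have hp : ∀ k : ZMod x, pf d (k + 1) = pf d k + par (d k) + 1 :=
    pf_step d ⟨y, hy⟩ hT
  have hz : ∀ k : ZMod x, ∑ i ∈ Finset.range x, stp d t (k + i) = 0 :=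
    sum_stp_zero d t (by omega) ht6
  have horb0 := F_orbit d t hx hp hz 0
  have horb1 := F_orbit d t hx hp hz 1
  -- useful nonzero facts
  have h1x : (1 : ZMod x) + 1 ≠ 0 := by
    intro h
    have h' : ((2:ℕ) : ZMod x) = 0 := by push_cast; linear_combination h
    rw [ZMod.natCast_eq_zero_iff] at h'
    have := Nat.le_of_dvd (by norm_num) h'
    omega
  have h0x : (1 : ZMod x) ≠ 0 := by
    intro h
    have h' : ((1:ℕ) : ZMod x) = 0 := by push_cast; exact h
    rw [ZMod.natCast_eq_zero_iff] at h'
    have := Nat.le_of_dvd (by norm_num) h'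
    omega
  have h16 : (1 : ZMod 6) + 1 ≠ 0 := by decide
  have h06 : (1 : ZMod 6) ≠ 0 := by decide
  have hz2 : ∀ b : ZMod 2, b = 0 ∨ b = 1 := by decide
  have hz2' : ∀ P : ZMod 2, ¬ (P + 0 = P + 1) := by decide
  refine ⟨{e : Sym2 (ZMod x × ZMod 6) | ∃ k j, par j = pf d k + 0 ∧ e = s((k, j), (k + 1, j + d k))} ∪
      {e : Sym2 (ZMod x × ZMod 6) | ∃ k j, par j = mf d t k + 0 ∧ e = s((k, j), (k, j + 1))},
      {e : Sym2 (ZMod x × ZMod 6) | ∃ k j, par j = pf d k + 1 ∧ e = s((k, j), (k + 1, j + d k))} ∪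
      {e : Sym2 (ZMod x × ZMod 6) | ∃ k j, par j = mf d t k + 1 ∧ e = s((k, j), (k, j + 1))},
      ?_, ?_, ?_, ?_⟩
  · -- disjoint
    rw [Set.disjoint_left]
    rintro e (⟨k, j, hpar, rfl⟩ | ⟨k, j, hpar, rfl⟩) h2 <;>
      rcases h2 with ⟨k', j', hpar', heq⟩ | ⟨k', j', hpar', heq⟩ <;>
      rw [Sym2.eq_iff] at heq <;>
      rcases heq with ⟨ha, hb⟩ | ⟨ha, hb⟩ <;>
      rw [Prod.mk.injEq] at ha hb
    · -- cross0/cross1, aligned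
      obtain ⟨rfl, rfl⟩ := ha
      rw [hpar] at hpar'
      exact hz2' _ hpar'
    · -- cross0/cross1, swapped: k = k'+1, k' = k+1
      obtain ⟨hk1, -⟩ := ha
      obtain ⟨hk2, -⟩ := hb
      apply h1x
      have : k + 1 + 1 = k := by rw [hk2, ← hk1]
      have h5 : k + (1 + 1) = k + 0 := by rw [← add_assoc, this, add_zero]
      exact (add_left_cancel h5)
    · -- cross0/ins1, aligned : k = k' and k+1 = k'
      obtain ⟨hk1, -⟩ := ha
      obtain ⟨hk2, -⟩ := hb
      apply h0x
      have h5 : k + 1 = k + 0 := by rw [hk2, ← hk1, add_zero]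
      exact (add_left_cancel h5)
    · -- cross0/ins1 swapped: k = k', k+1 = k'
      obtain ⟨hk1, -⟩ := ha
      obtain ⟨hk2, -⟩ := hb
      apply h0x
      have h5 : k + 1 = k + 0 := by rw [hk2, ← hk1, add_zero]
      exact (add_left_cancel h5)
    · -- ins0/cross1 aligned
      obtain ⟨hk1, -⟩ := ha
      obtain ⟨hk2, -⟩ := hb
      apply h0x
      have h5 : k' + 1 = k' + 0 := by rw [← hk2, hk1, add_zero]
      exact (add_left_cancel h5)
    · -- ins0/cross1 swapped
      obtain ⟨hk1, -⟩ := ha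
      obtain ⟨hk2, -⟩ := hb
      apply h0x
      have h5 : k' + 1 = k' + 0 := by rw [← hk1, hk2, add_zero]
      exact (add_left_cancel h5)
    · -- ins0/ins1 aligned
      obtain ⟨rfl, rfl⟩ := ha
      rw [hpar] at hpar'
      exact hz2' _ hpar'
    · -- ins0/ins1 swapped: j = j'+1, j+1 = j'
      obtain ⟨-, hj1⟩ := ha
      obtain ⟨-, hj2⟩ := hb
      apply h16
      have : j + 1 + 1 = j := by rw [hj2, ← hj1]
      have h5 : j + (1 + 1) = j + 0 := by rw [← add_assoc, this, add_zero]
      exact (add_left_cancel h5)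
  · -- union = edge set
    rw [hG, SimpleGraph.edgeSet_fromEdgeSet]
    ext e
    simp only [Set.mem_union, Set.mem_setOf_eq, Set.mem_diff]
    constructor
    · rintro ((⟨k, j, hpar, rfl⟩ | ⟨k, j, hpar, rfl⟩) | (⟨k, j, hpar, rfl⟩ | ⟨k, j, hpar, rfl⟩))
      · refine ⟨Or.inl ⟨k, j, rfl⟩, ?_⟩
        rw [Sym2.mem_diagSet, Sym2.mk_isDiag_iff, Prod.mk.injEq]
        rintro ⟨hk, -⟩
        exact h0x (add_left_cancel (show k + 1 = k + 0 by rw [add_zero, ← hk]))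
      · refine ⟨Or.inr ⟨k, j, rfl⟩, ?_⟩
        rw [Sym2.mem_diagSet, Sym2.mk_isDiag_iff, Prod.mk.injEq]
        rintro ⟨-, hj⟩
        exact h06 (add_left_cancel (show j + 1 = j + 0 by rw [add_zero, ← hj]))
      · refine ⟨Or.inl ⟨k, j, rfl⟩, ?_⟩
        rw [Sym2.mem_diagSet, Sym2.mk_isDiag_iff, Prod.mk.injEq]
        rintro ⟨hk, -⟩
        exact h0x (add_left_cancel (show k + 1 = k + 0 by rw [add_zero, ← hk]))
      · refine ⟨Or.inr ⟨k, j, rfl⟩, ?_⟩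
        rw [Sym2.mem_diagSet, Sym2.mk_isDiag_iff, Prod.mk.injEq]
        rintro ⟨-, hj⟩
        exact h06 (add_left_cancel (show j + 1 = j + 0 by rw [add_zero, ← hj]))
    · rintro ⟨(⟨k, j, rfl⟩ | ⟨k, j, rfl⟩), -⟩
      · rcases hz2 (par j - pf d k) with h | h
        · exact Or.inl (Or.inl ⟨k, j, by rw [← h]; ring, rfl⟩)
        · exact Or.inr (Or.inl ⟨k, j, by rw [← h]; ring, rfl⟩)
      · rcases hz2 (par j - mf d t k) with h | h
        · exact Or.inl (Or.inr ⟨k, j, by rw [← h]; ring, rfl⟩)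
        · exact Or.inr (Or.inr ⟨k, j, by rw [← h]; ring, rfl⟩)
  · rw [← E_eq d t 0]
    exact isCycleFactor_of_iterate _ (2*x) (by omega) horb0.1 horb0.2
  · rw [← E_eq d t 1]
    exact isCycleFactor_of_iterate _ (2*x) (by omega) horb1.1 horb1.2
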